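/- Suppose K(·,x) ∈ C₀(X) for every x ∈ X, span{K(·,x) : x ∈ X} is dense in C₀(X), and every kernel matrix at pairwise distinct points is invertible. If the linear representer theorem holds (for every m, pairwise distinct x₁,…,x_m ∈ X, every continuous Q : ℝ^m → [0,∞), every ψ : [0,∞) → [0,∞) with ψ(t) → ∞ as t → ∞, and every λ > 0, there exists c ∈ ℝ^m such that Σ_j c_j δ_{x_j} minimizes μ ↦ Q((f_μ(x_j))_j) + λψ(‖μ‖) over M(X)), then for every m, every m-tuple x₁,…,x_m of pairwise distinct points of X, and every x ∈ X one has ‖K[x]^{-1} K_x(x)‖₁ ≤ 1. -/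

import Mathlib

open MeasureTheory Matrix
open scoped ENNReal NNReal

/-- The integral of a function against a finite signed Borel measure,
defined via the Jordan decomposition. -/
noncomputable def sintegral {X : Type*} [MeasurableSpace X]
    (μ : SignedMeasure X) (f : X → ℝ) : ℝ :=
  (∫ t, f t ∂μ.toJordanDecomposition.posPart) - ∫ t, f t ∂μ.toJordanDecomposition.negPart

/-- The total variation norm of a finite signed Borel measure. -/
noncomputable def tvNorm {X : Type*} [MeasurableSpace X] (μ : SignedMeasure X) : ℝ :=
  (μ.totalVariation Set.univ).toReal

/-- The Dirac measure at a point, as a signed measure. -/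
noncomputable def diracSM {X : Type*} [MeasurableSpace X] (x : X) : SignedMeasure X :=
  (Measure.dirac x).toSignedMeasure

section Aux

variable {X : Type*} [MeasurableSpace X]

lemma vm_sum_apply {ι : Type*} (s : Finset ι) (v : ι → VectorMeasure X ℝ) (i : Set X) :
    (∑ k ∈ s, v k) i = ∑ k ∈ s, v k i := by
  induction s using Finset.cons_induction with
  | empty => simp
  | cons a s ha ih => rw [Finset.sum_cons, VectorMeasure.add_apply, ih, Finset.sum_cons]

lemma jordan_eq {p q : Measure X} [IsFiniteMeasure p] [IsFiniteMeasure q]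
    (h : p.MutuallySingular q) {μ : SignedMeasure X}
    (hμ : μ = p.toSignedMeasure - q.toSignedMeasure) :
    μ.toJordanDecomposition = JordanDecomposition.mk p q h := by
  apply JordanDecomposition.toSignedMeasure_injective
  rw [SignedMeasure.toSignedMeasure_toJordanDecomposition, hμ]
  rfl

lemma sintegral_eq {p q : Measure X} [IsFiniteMeasure p] [IsFiniteMeasure q]
    (h : p.MutuallySingular q) {μ : SignedMeasure X}
    (hμ : μ = p.toSignedMeasure - q.toSignedMeasure) (f : X → ℝ) :
    sintegral μ f = (∫ t, f t ∂p) - ∫ t, f t ∂q := by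
  rw [sintegral, jordan_eq h hμ]

lemma tvNorm_eq {p q : Measure X} [IsFiniteMeasure p] [IsFiniteMeasure q]
    (h : p.MutuallySingular q) {μ : SignedMeasure X}
    (hμ : μ = p.toSignedMeasure - q.toSignedMeasure) :
    tvNorm μ = (p Set.univ).toReal + (q Set.univ).toReal := by
  rw [tvNorm, SignedMeasure.totalVariation, jordan_eq h hμ]
  simp only [Measure.add_apply]
  exact ENNReal.toReal_add (measure_ne_top _ _) (measure_ne_top _ _)

lemma totalVariation_eq {p q : Measure X} [IsFiniteMeasure p] [IsFiniteMeasure q]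
    (h : p.MutuallySingular q) {μ : SignedMeasure X}
    (hμ : μ = p.toSignedMeasure - q.toSignedMeasure) :
    μ.totalVariation = p + q := by
  rw [SignedMeasure.totalVariation, jordan_eq h hμ]

lemma diracSM_eq (x : X) :
    diracSM x = (Measure.dirac x).toSignedMeasure - (0 : Measure X).toSignedMeasure := by
  rw [Measure.toSignedMeasure_zero, sub_zero, diracSM]

lemma sintegral_diracSM [MeasurableSingletonClass X] (x : X) (f : X → ℝ) :
    sintegral (diracSM x) f = f x := by
  rw [sintegral_eq (Measure.MutuallySingular.zero_right) (diracSM_eq x)]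
  simp [integral_dirac]

lemma tvNorm_diracSM (x : X) : tvNorm (diracSM x) = 1 := by
  rw [tvNorm_eq (Measure.MutuallySingular.zero_right) (diracSM_eq x)]
  simp

lemma totalVariation_diracSM (x : X) :
    (diracSM x).totalVariation = Measure.dirac x := by
  rw [totalVariation_eq (Measure.MutuallySingular.zero_right) (diracSM_eq x), add_zero]

/-- The Dirac measure is regular on a T1 Borel space. -/
lemma regular_dirac {Y : Type*} [TopologicalSpace Y] [T1Space Y] [MeasurableSpace Y]
    [BorelSpace Y] (x : Y) : (Measure.dirac x).Regular := by
  refine { toIsFiniteMeasureOnCompacts := inferInstance,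
           outerRegular := ?_, innerRegular := ?_ }
  · intro A hA r hr
    by_cases hx : x ∈ A
    · refine ⟨Set.univ, Set.subset_univ _, isOpen_univ, ?_⟩
      rwa [Measure.dirac_apply_of_mem (Set.mem_univ x),
        ← Measure.dirac_apply_of_mem hx]
    · refine ⟨{x}ᶜ, ?_, isOpen_compl_singleton, ?_⟩
      · intro a ha
        simp only [Set.mem_compl_iff, Set.mem_singleton_iff]
        rintro rfl; exact hx ha
      · have h0 : Measure.dirac x A = 0 := by
          rw [Measure.dirac_apply' _ hA, Set.indicator_of_notMem hx]
        have h1 : Measure.dirac x {x}ᶜ = 0 := by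
          rw [Measure.dirac_apply' _ (measurableSet_singleton x).compl,
            Set.indicator_of_notMem (by simp)]
        rw [h1]
        exact lt_of_le_of_lt (le_of_eq h0.symm) hr |>.trans_le le_rfl
  · intro U hU r hr
    have hxU : x ∈ U := by
      by_contra hx
      rw [Measure.dirac_apply' _ hU.measurableSet, Set.indicator_of_notMem hx] at hr
      exact (not_lt_of_ge (zero_le : 0 ≤ r)) hr
    refine ⟨{x}, Set.singleton_subset_iff.2 hxU, isCompact_singleton, ?_⟩
    have h1 : Measure.dirac x {x} = 1 := Measure.dirac_apply_of_mem rfl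
    have hle : Measure.dirac x U ≤ 1 := by
      rw [← (by simp : Measure.dirac x Set.univ = 1)]
      exact measure_mono (Set.subset_univ U)
    rw [h1]; exact lt_of_lt_of_le hr hle

variable [MeasurableSingletonClass X]

/-- The positive-coefficient part of a finite combination of Diracs. -/
noncomputable def posM {m : ℕ} (xs : Fin m → X) (c : Fin m → ℝ) : Measure X :=
  ∑ k, (c k).toNNReal • Measure.dirac (xs k)

instance {m : ℕ} (xs : Fin m → X) (c : Fin m → ℝ) : IsFiniteMeasure (posM xs c) := by
  unfold posM; infer_instance

lemma posM_apply {m : ℕ} (xs : Fin m → X) (c : Fin m → ℝ) (i : Set X) :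
    posM xs c i = ∑ k, ((c k).toNNReal : ℝ≥0∞) * Measure.dirac (xs k) i := by
  rw [posM, Measure.finset_sum_apply]
  refine Finset.sum_congr rfl fun k _ => ?_
  rw [Measure.smul_apply, ENNReal.smul_def, smul_eq_mul]

lemma posM_apply_toReal {m : ℕ} (xs : Fin m → X) (c : Fin m → ℝ) (i : Set X) :
    (posM xs c i).toReal
      = ∑ k, ((c k) ⊔ 0) * (Measure.dirac (xs k) i).toReal := by
  rw [posM_apply, ENNReal.toReal_sum]
  · refine Finset.sum_congr rfl fun k _ => ?_
    rw [ENNReal.toReal_mul, ENNReal.coe_toReal, Real.coe_toNNReal']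
  · intro k _
    exact ENNReal.mul_ne_top ENNReal.coe_ne_top (measure_ne_top _ _)

lemma integral_posM {m : ℕ} (xs : Fin m → X) (c : Fin m → ℝ)
    [TopologicalSpace X] [OpensMeasurableSpace X] (f : BoundedContinuousFunction X ℝ) :
    ∫ t, f t ∂(posM xs c) = ∑ k, ((c k) ⊔ 0) * f (xs k) := by
  rw [posM, integral_finset_sum_measure (fun k _ => f.integrable _)]
  refine Finset.sum_congr rfl fun k _ => ?_
  rw [integral_smul_nnreal_measure, integral_dirac, NNReal.smul_def, smul_eq_mul,
    Real.coe_toNNReal']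

lemma posM_mutuallySingular {m : ℕ} {xs : Fin m → X} (hxs : Function.Injective xs)
    (c : Fin m → ℝ) :
    (posM xs c).MutuallySingular (posM xs (fun k => -(c k))) := by
  refine ⟨xs '' {k | c k < 0}, (Set.toFinite _).measurableSet, ?_, ?_⟩
  · rw [posM_apply]
    refine Finset.sum_eq_zero fun k _ => ?_
    by_cases h0 : (c k).toNNReal = 0
    · rw [h0, ENNReal.coe_zero, zero_mul]
    · have hck : 0 < c k := by
        by_contra h
        exact h0 (Real.toNNReal_eq_zero.2 (le_of_not_gt h))
      have hnot : xs k ∉ xs '' {k | c k < 0} := by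
        rintro ⟨l, hl, hlk⟩
        have := hxs hlk
        rw [this] at hl
        exact absurd hck (not_lt_of_gt hl)
      rw [Measure.dirac_apply' _ (Set.toFinite _).measurableSet,
        Set.indicator_of_notMem hnot, mul_zero]
  · rw [posM_apply]
    refine Finset.sum_eq_zero fun k _ => ?_
    by_cases h0 : (-(c k)).toNNReal = 0
    · rw [h0, ENNReal.coe_zero, zero_mul]
    · have hck : c k < 0 := by
        by_contra h
        exact h0 (Real.toNNReal_eq_zero.2 (by linarith [le_of_not_gt h]))
      have hmem : xs k ∈ xs '' {k | c k < 0} := ⟨k, hck, rfl⟩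
      rw [Measure.dirac_apply' _ (Set.toFinite _).measurableSet.compl,
        Set.indicator_of_notMem (by simpa using hmem), mul_zero]

lemma sum_diracSM_eq {m : ℕ} (xs : Fin m → X) (c : Fin m → ℝ) :
    (∑ k, c k • diracSM (xs k))
      = (posM xs c).toSignedMeasure - (posM xs (fun k => -(c k))).toSignedMeasure := by
  ext i hi
  rw [VectorMeasure.sub_apply, Measure.toSignedMeasure_apply_measurable hi,
    Measure.toSignedMeasure_apply_measurable hi, vm_sum_apply, measureReal_def, measureReal_def,
    posM_apply_toReal, posM_apply_toReal, ← Finset.sum_sub_distrib]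
  refine Finset.sum_congr rfl fun k _ => ?_
  rw [VectorMeasure.smul_apply, diracSM, Measure.toSignedMeasure_apply_measurable hi, measureReal_def,
    smul_eq_mul, ← sub_mul, max_zero_sub_max_neg_zero_eq_self]

lemma sintegral_sum_diracSM {m : ℕ} {xs : Fin m → X} (hxs : Function.Injective xs)
    (c : Fin m → ℝ) [TopologicalSpace X] [OpensMeasurableSpace X]
    (f : BoundedContinuousFunction X ℝ) :
    sintegral (∑ k, c k • diracSM (xs k)) (⇑f) = ∑ k, c k * f (xs k) := by
  rw [sintegral_eq (posM_mutuallySingular hxs c) (sum_diracSM_eq xs c) (⇑f),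
    integral_posM, integral_posM, ← Finset.sum_sub_distrib]
  refine Finset.sum_congr rfl fun k _ => ?_
  rw [← sub_mul, max_zero_sub_max_neg_zero_eq_self]

lemma tvNorm_sum_diracSM {m : ℕ} {xs : Fin m → X} (hxs : Function.Injective xs)
    (c : Fin m → ℝ) :
    tvNorm (∑ k, c k • diracSM (xs k)) = ∑ k, |c k| := by
  rw [tvNorm_eq (posM_mutuallySingular hxs c) (sum_diracSM_eq xs c),
    posM_apply_toReal, posM_apply_toReal, ← Finset.sum_add_distrib]
  refine Finset.sum_congr rfl fun k _ => ?_
  have : Measure.dirac (xs k) Set.univ = 1 := by simp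
  rw [this, ENNReal.toReal_one, mul_one, mul_one]
  rcases le_total (c k) 0 with h | h
  · rw [abs_of_nonpos h, sup_eq_right.2 h, sup_eq_left.2 (by linarith), zero_add]
  · rw [abs_of_nonneg h, sup_eq_left.2 h, sup_eq_right.2 (by linarith), add_zero]

end Aux

/-- with `K(·,x) ∈ C₀(X)` (`K x : C₀(X,ℝ)` is `t ↦ K(t,x)`), density of
`span{K(·,x)}` in `C₀(X)`, and every kernel matrix at pairwise distinct points invertible,
if the linear representer theorem holds (for all pairwise distinct `x₁,…,x_m`, continuous
`Q : ℝ^m → [0,∞)`, `ψ : [0,∞) → [0,∞)` with `ψ(t) → ∞`, and `λ > 0`, some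
`Σ_j c_j δ_{x_j}` minimizes `μ ↦ Q((f_μ(x_j))_j) + λψ(‖μ‖)` over `M(X)`), then for all
pairwise distinct `x₁,…,x_m` and all `x ∈ X`, `‖K[x]⁻¹ K_x(x)‖₁ ≤ 1`, where
`(K[x])_{j,k} = K(x_k,x_j) = (K (xs j)) (xs k)` and `(K_x(x))_j = K(x,x_j) = (K (xs j)) x`. -/
theorem stmt8 {X : Type*} [TopologicalSpace X] [LocallyCompactSpace X] [T2Space X]
    [MeasurableSpace X] [BorelSpace X]
    (K : X → ZeroAtInftyContinuousMap X ℝ)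
    (hdense : Dense (↑(Submodule.span ℝ (Set.range K)) :
      Set (ZeroAtInftyContinuousMap X ℝ)))
    (hinvertible : ∀ (m : ℕ) (xs : Fin m → X), Function.Injective xs →
      IsUnit (Matrix.of fun j k : Fin m => (K (xs j)) (xs k)).det)
    (hrepresenter : ∀ (m : ℕ) (xs : Fin m → X), Function.Injective xs →
      ∀ Q : (Fin m → ℝ) → ℝ, Continuous Q → (∀ v, 0 ≤ Q v) →
      ∀ ψ : ℝ → ℝ, (∀ t, 0 ≤ t → 0 ≤ ψ t) →
        Filter.Tendsto ψ Filter.atTop Filter.atTop →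
      ∀ lam : ℝ, 0 < lam →
      ∃ c : Fin m → ℝ, ∀ μ : SignedMeasure X, μ.totalVariation.Regular →
        Q (fun j => sintegral (∑ k, c k • diracSM (xs k)) (K (xs j)))
            + lam * ψ (tvNorm (∑ k, c k • diracSM (xs k)))
          ≤ Q (fun j => sintegral μ (K (xs j))) + lam * ψ (tvNorm μ)) :
    ∀ (m : ℕ) (xs : Fin m → X), Function.Injective xs → ∀ x : X,
      ∑ j, |(((Matrix.of fun j k : Fin m => (K (xs j)) (xs k))⁻¹ *ᵥ
        fun j => (K (xs j)) x) j)| ≤ 1 := by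
  intro m xs hxs x
  set A : Matrix (Fin m) (Fin m) ℝ := Matrix.of fun j k : Fin m => (K (xs j)) (xs k) with hA
  set b : Fin m → ℝ := fun j => (K (xs j)) x with hb
  set B : Matrix (Fin m) (Fin m) ℝ := A⁻¹ with hB
  set M : ℝ := ∑ j, ∑ k, |B j k| with hM
  have hM0 : 0 ≤ M := Finset.sum_nonneg fun j _ => Finset.sum_nonneg fun k _ => abs_nonneg _
  -- the target quantity
  refine le_of_forall_pos_le_add fun ε hε => ?_
  set lam : ℝ := ε / (M + 1) with hlam
  have hlam0 : 0 < lam := div_pos hε (by linarith)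
  -- the data for the representer theorem
  set Q : (Fin m → ℝ) → ℝ := fun v => ∑ j, |v j - b j| with hQ
  have hQc : Continuous Q := by
    apply continuous_finset_sum
    intro j _
    exact ((continuous_apply j).sub continuous_const).abs
  have hQ0 : ∀ v, 0 ≤ Q v := fun v => Finset.sum_nonneg fun j _ => abs_nonneg _
  obtain ⟨c, hc⟩ := hrepresenter m xs hxs Q hQc hQ0 id (fun t ht => ht) Filter.tendsto_id
    lam hlam0
  -- apply minimality with μ = δ_x
  have hreg : (diracSM x).totalVariation.Regular := by
    rw [totalVariation_diracSM]
    exact regular_dirac x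
  have hineq := hc (diracSM x) hreg
  -- rewrite all the quantities
  have hs1 : ∀ j, sintegral (∑ k, c k • diracSM (xs k)) (K (xs j)) = (A *ᵥ c) j := by
    intro j
    have := sintegral_sum_diracSM hxs c ((K (xs j)).toBCF)
    rw [show (⇑((K (xs j)).toBCF)) = ⇑(K (xs j)) from rfl] at this
    rw [this, mulVec, dotProduct]
    exact Finset.sum_congr rfl fun k _ => mul_comm (c k) _
  have hs2 : ∀ j, sintegral (diracSM x) (K (xs j)) = b j := fun j =>
    sintegral_diracSM x (K (xs j))
  rw [tvNorm_sum_diracSM hxs c, tvNorm_diracSM] at hineq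
  simp only [hs1, hs2, id_eq] at hineq
  have hQb : Q (fun j => b j) = 0 := by
    rw [hQ]
    exact Finset.sum_eq_zero fun j _ => by simp
  rw [hQb, zero_add, mul_one] at hineq
  -- extract the two consequences
  have hsum_c : ∑ k, |c k| ≤ 1 := by
    have h1 := hQ0 (fun j => (A *ᵥ c) j)
    nlinarith
  have hE : Q (fun j => (A *ᵥ c) j) ≤ lam := by
    have h2 : 0 ≤ ∑ k, |c k| := Finset.sum_nonneg fun k _ => abs_nonneg _
    nlinarith
  -- recover the exact solution
  have hBA : B * A = 1 := Matrix.nonsing_inv_mul A (hinvertible m xs hxs)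
  have hkey : ∀ j, (B *ᵥ b) j = c j + (B *ᵥ (fun i => b i - (A *ᵥ c) i)) j := by
    intro j
    have : B *ᵥ (fun i => b i - (A *ᵥ c) i) = B *ᵥ b - B *ᵥ (A *ᵥ c) := by
      rw [← Matrix.mulVec_sub]
      congr 1
    rw [this]
    have hBAc : B *ᵥ (A *ᵥ c) = c := by
      rw [Matrix.mulVec_mulVec, hBA, Matrix.one_mulVec]
    rw [hBAc]
    simp
  have hE' : ∑ j, |(A *ᵥ c) j - b j| ≤ lam := hE
  have hdbound : ∀ i, |b i - (A *ᵥ c) i| ≤ lam := by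
    intro i
    refine le_trans ?_ hE'
    rw [abs_sub_comm]
    exact Finset.single_le_sum (fun j _ => abs_nonneg (((A *ᵥ c) j) - b j)) (Finset.mem_univ i)
  calc ∑ j, |(B *ᵥ b) j|
      ≤ ∑ j, (|c j| + |(B *ᵥ (fun i => b i - (A *ᵥ c) i)) j|) := by
        refine Finset.sum_le_sum fun j _ => ?_
        rw [hkey j]
        exact abs_add_le _ _
    _ = (∑ j, |c j|) + ∑ j, |(B *ᵥ (fun i => b i - (A *ᵥ c) i)) j| :=
        Finset.sum_add_distrib
    _ ≤ 1 + ∑ j, ∑ k, |B j k| * lam := by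
        refine add_le_add hsum_c (Finset.sum_le_sum fun j _ => ?_)
        rw [mulVec, dotProduct]
        refine le_trans (Finset.abs_sum_le_sum_abs _ _) (Finset.sum_le_sum fun k _ => ?_)
        rw [abs_mul]
        exact mul_le_mul_of_nonneg_left (hdbound k) (abs_nonneg _)
    _ ≤ 1 + ε := by
        have : ∑ j, ∑ k : Fin m, |B j k| * lam = M * lam := by
          rw [hM, Finset.sum_mul]
          exact Finset.sum_congr rfl fun j _ => by rw [Finset.sum_mul]
        rw [this]
        have : M * lam ≤ ε := by
          rw [hlam]
          rw [div_eq_inv_mul, ← mul_assoc]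
          have h1 : M * (M + 1)⁻¹ ≤ 1 := by
            rw [mul_inv_le_iff₀ (by linarith : (0:ℝ) < M + 1)]
            linarith
          nlinarith
        linarith
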